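/- Let N ≥ 1 and let λ = 2^{-(N+1)/N}. For each vertex v of the unit cube [0,1]^{N+1} (there are 2^{N+1} of them) define the contraction f_v : ℝ^{N+1} → ℝ^{N+1} by f_v(x̄) = λ x̄ + (1 − λ) v. For k ≥ 0, let E_k be the union over all words w = (v_1, …, v_k) of length k of the sets f_{v_1} ∘ ⋯ ∘ f_{v_k}([0,1]^{N+1}) (with E_0 = [0,1]^{N+1}), and let E = ⋂_{k ≥ 0} E_k. Then 0 < H^N(E) < ∞, where H^N is the N-dimensional Hausdorff measure on ℝ^{N+1}. -/

import Mathlib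

open MeasureTheory
open scoped ENNReal

/-- The contraction ratio `λ = 2^{-(N+1)/N}`. -/
noncomputable def lam (N : ℕ) : ℝ := (2 : ℝ) ^ (-(((N : ℝ) + 1) / (N : ℝ)))

/-- The vertex of `[0,1]^{N+1}` encoded by `σ : Fin (N+1) → Bool`. -/
noncomputable def cornerVec (N : ℕ) (σ : Fin (N + 1) → Bool) :
    EuclideanSpace ℝ (Fin (N + 1)) :=
  (WithLp.equiv 2 (Fin (N + 1) → ℝ)).symm fun i => if σ i then 1 else 0

/-- The contraction `f_v(x̄) = λ x̄ + (1 − λ) v` towards the vertex `v = cornerVec N σ`. -/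
noncomputable def cantorF (N : ℕ) (σ : Fin (N + 1) → Bool)
    (z : EuclideanSpace ℝ (Fin (N + 1))) : EuclideanSpace ℝ (Fin (N + 1)) :=
  lam N • z + (1 - lam N) • cornerVec N σ

/-- The unit cube `[0,1]^{N+1}`. -/
def unitCube (N : ℕ) : Set (EuclideanSpace ℝ (Fin (N + 1))) :=
  {z | ∀ i, z i ∈ Set.Icc (0 : ℝ) 1}

/-- The cube `Q_w = f_{v₁} ∘ ⋯ ∘ f_{v_k}([0,1]^{N+1})` for a word `w = (v₁,…,v_k)`. -/
noncomputable def cantorCube (N : ℕ) :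
    (k : ℕ) → (Fin k → (Fin (N + 1) → Bool)) → Set (EuclideanSpace ℝ (Fin (N + 1)))
  | 0, _ => unitCube N
  | k + 1, w => cantorF N (w 0) '' cantorCube N k (fun i => w i.succ)

/-- The union `E_k` of all cubes of generation `k`. -/
noncomputable def cantorEk (N k : ℕ) : Set (EuclideanSpace ℝ (Fin (N + 1))) :=
  ⋃ w : Fin k → (Fin (N + 1) → Bool), cantorCube N k w

/-- The corner Cantor set `E = ⋂_k E_k`. -/
noncomputable def cantorE (N : ℕ) : Set (EuclideanSpace ℝ (Fin (N + 1))) :=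
  ⋂ k, cantorEk N k

open TopologicalSpace Filter

variable {N : ℕ}

lemma lam_pos (N : ℕ) : 0 < lam N := Real.rpow_pos_of_pos (by norm_num) _

lemma lam_lt_half {N : ℕ} (hN : 1 ≤ N) : lam N < 1/2 := by
  have hN0 : (0:ℝ) < (N:ℝ) := by exact_mod_cast hN
  have h1 : (1:ℝ) < ((N:ℝ)+1)/(N:ℝ) := by
    rw [lt_div_iff₀ hN0]; linarith
  have : lam N < (2:ℝ) ^ (-(1:ℝ)) := by
    apply Real.rpow_lt_rpow_left_iff (x := 2) (by norm_num) |>.mpr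
    linarith
  simpa [Real.rpow_neg_one] using this.trans_le (by norm_num)

lemma lam_lt_one {N : ℕ} (hN : 1 ≤ N) : lam N < 1 :=
  (lam_lt_half hN).trans (by norm_num)

lemma lam_pow {N : ℕ} (hN : 1 ≤ N) : lam N ^ N = ((1:ℝ)/2) ^ (N+1) := by
  have hN0 : ((N:ℝ)) ≠ 0 := by positivity
  rw [lam, ← Real.rpow_natCast ((2:ℝ) ^ _) N, ← Real.rpow_mul (by norm_num)]
  have h2 : -((↑N + 1) / ↑N) * (N:ℝ) = -((N:ℝ)+1) := by field_simp
  rw [h2, one_div, inv_pow, ← Real.rpow_natCast (2:ℝ) (N+1), ← Real.rpow_neg (by norm_num)]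
  push_cast
  ring_nf

noncomputable def base (N : ℕ) (k : ℕ) (w : Fin k → (Fin (N + 1) → Bool)) (i : Fin (N + 1)) : ℝ :=
  ∑ j : Fin k, (1 - lam N) * lam N ^ (j : ℕ) * (if w j i then 1 else 0)

lemma cantorF_apply (N : ℕ) (σ : Fin (N + 1) → Bool) (z : EuclideanSpace ℝ (Fin (N + 1)))
    (i : Fin (N + 1)) :
    cantorF N σ z i = lam N * z i + (1 - lam N) * (if σ i then 1 else 0) := by
  simp [cantorF, cornerVec]

lemma base_succ (N k : ℕ) (w : Fin (k+1) → (Fin (N + 1) → Bool)) (i : Fin (N + 1)) :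
    base N (k+1) w i
      = (1 - lam N) * (if w 0 i then 1 else 0) + lam N * base N k (fun j => w j.succ) i := by
  rw [base, Fin.sum_univ_succ]
  simp only [base, Finset.mul_sum]
  congr 1
  · simp
  · apply Finset.sum_congr rfl
    intro j _
    simp [Fin.val_succ, pow_succ]
    ring_nf

lemma cantorCube_eq (N : ℕ) (hN : 1 ≤ N) (k : ℕ) (w : Fin k → (Fin (N + 1) → Bool)) :
    cantorCube N k w
      = {z | ∀ i, z i ∈ Set.Icc (base N k w i) (base N k w i + lam N ^ k)} := by
  induction k with
  | zero =>
    simp only [cantorCube, unitCube, base]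
    norm_num
  | succ k ih =>
    have hl := lam_pos N
    ext z
    simp only [cantorCube, Set.mem_image, ih, Set.mem_setOf_eq]
    constructor
    · rintro ⟨y, hy, rfl⟩ i
      have := hy i
      rw [cantorF_apply, base_succ]
      rcases this with ⟨h1, h2⟩
      constructor
      · nlinarith [hl]
      · rw [pow_succ']
        nlinarith [hl]
    · intro hz
      refine ⟨(WithLp.equiv 2 (Fin (N + 1) → ℝ)).symm
          (fun i => (z i - (1 - lam N) * (if w 0 i then 1 else 0)) / lam N), fun i => ?_, ?_⟩
      · have := hz i
        rw [base_succ] at this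
        rcases this with ⟨h1, h2⟩
        simp only [WithLp.equiv_symm_apply, PiLp.toLp_apply]
        rw [pow_succ'] at h2
        constructor
        · rw [le_div_iff₀ hl]; nlinarith
        · rw [div_le_iff₀ hl]; nlinarith
      · ext i
        rw [cantorF_apply]
        simp only [WithLp.equiv_symm_apply, PiLp.toLp_apply]
        field_simp
        ring

lemma one_sub_lam_pos (hN : 1 ≤ N) : 0 < 1 - lam N := by
  have := lam_lt_one hN; linarith

lemma sep_pos (hN : 1 ≤ N) : 0 < 1 - 2 * lam N := by
  have := lam_lt_half hN; linarith

lemma geom_lam (hN : 1 ≤ N) (k : ℕ) :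
    ∑ j ∈ Finset.range k, (1 - lam N) * lam N ^ j = 1 - lam N ^ k := by
  induction k with
  | zero => simp
  | succ k ih =>
    rw [Finset.sum_range_succ, ih, pow_succ]
    ring

lemma base_nonneg (hN : 1 ≤ N) (k : ℕ) (w : Fin k → (Fin (N + 1) → Bool)) (i : Fin (N + 1)) :
    0 ≤ base N k w i := by
  apply Finset.sum_nonneg
  intro j _
  have h1 := one_sub_lam_pos hN
  have h2 := lam_pos N
  have : (0:ℝ) ≤ (if w j i then (1:ℝ) else 0) := by positivity
  positivity

lemma base_le (hN : 1 ≤ N) (k : ℕ) (w : Fin k → (Fin (N + 1) → Bool)) (i : Fin (N + 1)) :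
    base N k w i ≤ 1 - lam N ^ k := by
  rw [← geom_lam hN k, base, ← Fin.sum_univ_eq_sum_range (fun j => (1 - lam N) * lam N ^ j) k]
  apply Finset.sum_le_sum
  intro j _
  have h1 := one_sub_lam_pos hN
  have h2 := pow_pos (lam_pos N) (j:ℕ)
  split_ifs <;> nlinarith

lemma cube_subset_unit (hN : 1 ≤ N) (k : ℕ) (w : Fin k → (Fin (N + 1) → Bool)) :
    cantorCube N k w ⊆ unitCube N := by
  rw [cantorCube_eq N hN k w]
  intro z hz i
  have h := hz i
  have h1 := base_nonneg hN k w i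
  have h2 := base_le hN k w i
  exact ⟨le_trans h1 h.1, by linarith [h.2]⟩

lemma coord_le_dist (z z' : EuclideanSpace ℝ (Fin (N+1))) (i : Fin (N+1)) :
    |z i - z' i| ≤ dist z z' := by
  rw [EuclideanSpace.dist_eq, ← Real.sqrt_sq_eq_abs]
  apply Real.sqrt_le_sqrt
  have : ∀ j, (0:ℝ) ≤ dist (z j) (z' j) ^ 2 := fun j => sq_nonneg _
  calc (z i - z' i)^2 = dist (z i) (z' i) ^ 2 := by rw [Real.dist_eq, sq_abs]
    _ ≤ ∑ j, dist (z j) (z' j) ^ 2 := Finset.single_le_sum (fun j _ => this j) (Finset.mem_univ i)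

lemma dist_le_of_mem_cube (hN : 1 ≤ N) (k : ℕ) (w : Fin k → (Fin (N + 1) → Bool))
    {z z' : EuclideanSpace ℝ (Fin (N+1))} (hz : z ∈ cantorCube N k w)
    (hz' : z' ∈ cantorCube N k w) :
    dist z z' ≤ Real.sqrt (N+1) * lam N ^ k := by
  rw [cantorCube_eq N hN k w] at hz hz'
  rw [EuclideanSpace.dist_eq]
  have hb : ∀ i, dist (z i) (z' i) ^ 2 ≤ (lam N ^ k)^2 := by
    intro i
    have h1 := hz i
    have h2 := hz' i
    rw [Real.dist_eq, sq_abs]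
    rcases h1 with ⟨a1, b1⟩; rcases h2 with ⟨a2, b2⟩
    nlinarith
  calc Real.sqrt (∑ i, dist (z i) (z' i) ^ 2)
      ≤ Real.sqrt (∑ _i : Fin (N+1), (lam N ^ k)^2) :=
        Real.sqrt_le_sqrt (Finset.sum_le_sum fun i _ => hb i)
    _ = Real.sqrt ((N+1) * (lam N ^ k)^2) := by
        rw [Finset.sum_const, Finset.card_univ, Fintype.card_fin]; push_cast; ring_nf
    _ = Real.sqrt (N+1) * lam N ^ k := by
        rw [Real.sqrt_mul (by positivity), Real.sqrt_sq (pow_nonneg (lam_pos N).le k)]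

lemma coord1 (hN : 1 ≤ N) (k : ℕ) (w : Fin (k+1) → (Fin (N + 1) → Bool))
    {z : EuclideanSpace ℝ (Fin (N+1))} (hz : z ∈ cantorCube N (k+1) w) (i : Fin (N+1)) :
    z i ∈ Set.Icc ((1 - lam N) * (if w 0 i then (1:ℝ) else 0))
      ((1 - lam N) * (if w 0 i then (1:ℝ) else 0) + lam N) := by
  rw [cantorCube_eq N hN _ w] at hz
  have h := hz i
  rw [base_succ] at h
  have h1 := base_nonneg hN k (fun j => w j.succ) i
  have h2 := base_le hN k (fun j => w j.succ) i
  have hl := lam_pos N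
  have hp := pow_pos hl k
  rcases h with ⟨a, b⟩
  constructor
  · nlinarith
  · rw [pow_succ'] at b
    nlinarith

lemma sep1 (hN : 1 ≤ N) {k m : ℕ} {w : Fin (k+1) → (Fin (N + 1) → Bool)}
    {w' : Fin (m+1) → (Fin (N + 1) → Bool)} {i : Fin (N+1)} (hi : w 0 i ≠ w' 0 i)
    {z z' : EuclideanSpace ℝ (Fin (N+1))} (hz : z ∈ cantorCube N (k+1) w)
    (hz' : z' ∈ cantorCube N (m+1) w') :
    1 - 2 * lam N ≤ dist z z' := by
  have c1 := coord1 hN k w hz i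
  have c2 := coord1 hN m w' hz' i
  have hd := coord_le_dist z z' i
  rcases c1 with ⟨a1, b1⟩; rcases c2 with ⟨a2, b2⟩
  rcases Bool.eq_false_or_eq_true (w 0 i) with h | h <;>
    rcases Bool.eq_false_or_eq_true (w' 0 i) with h' | h'
  · simp [h, h'] at hi
  · simp only [h] at a1 b1
    simp only [h'] at a2 b2
    norm_num at a1 b1 a2 b2
    have habs : 1 - 2 * lam N ≤ |z i - z' i| :=
      le_trans (by linarith) (le_abs_self _)
    linarith
  · simp only [h] at a1 b1
    simp only [h'] at a2 b2
    norm_num at a1 b1 a2 b2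
    have habs : 1 - 2 * lam N ≤ |z i - z' i| := by
      rw [abs_sub_comm]
      exact le_trans (by linarith) (le_abs_self _)
    linarith
  · simp [h, h'] at hi

lemma dist_cantorF (N : ℕ) (σ : Fin (N+1) → Bool) (z z' : EuclideanSpace ℝ (Fin (N+1))) :
    dist (cantorF N σ z) (cantorF N σ z') = lam N * dist z z' := by
  rw [dist_eq_norm, dist_eq_norm]
  have : cantorF N σ z - cantorF N σ z' = lam N • (z - z') := by
    simp [cantorF, smul_sub]
  rw [this, norm_smul, Real.norm_eq_abs, abs_of_pos (lam_pos N)]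

lemma sep (hN : 1 ≤ N) : ∀ (k : ℕ) (w w' : Fin (k+1) → (Fin (N + 1) → Bool))
    (z z' : EuclideanSpace ℝ (Fin (N+1))), w ≠ w' →
    z ∈ cantorCube N (k+1) w → z' ∈ cantorCube N (k+1) w' →
    (1 - 2 * lam N) * lam N ^ k ≤ dist z z' := by
  intro k
  induction k with
  | zero =>
    intro w w' z z' hww hz hz'
    have h0 : w 0 ≠ w' 0 := by
      intro h
      apply hww
      funext j
      have : j = 0 := Fin.eq_zero j
      rw [this, h]
    obtain ⟨i, hi⟩ := Function.ne_iff.mp h0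
    simpa using sep1 hN hi hz hz'
  | succ k ih =>
    intro w w' z z' hww hz hz'
    by_cases h0 : w 0 = w' 0
    · have htail : (fun j => w (Fin.succ j)) ≠ (fun j => w' (Fin.succ j)) := by
        intro h
        apply hww
        funext j
        refine Fin.cases ?_ ?_ j
        · exact h0
        · intro j'
          exact congrFun h j'
      rcases hz with ⟨y, hy, rfl⟩
      rcases hz' with ⟨y', hy', rfl⟩
      rw [h0, dist_cantorF]
      have := ih (fun j => w (Fin.succ j)) (fun j => w' (Fin.succ j)) y y' htail hy hy'
      have hl := lam_pos N
      calc (1 - 2*lam N) * lam N ^ (k+1) = lam N * ((1 - 2*lam N) * lam N ^ k) := by ring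
        _ ≤ lam N * dist y y' := by
            apply mul_le_mul_of_nonneg_left this hl.le
    · obtain ⟨i, hi⟩ := Function.ne_iff.mp h0
      have h1 := sep1 hN hi hz hz'
      have hl := lam_pos N
      have hs := sep_pos hN
      have hp : lam N ^ (k+1) ≤ 1 := pow_le_one₀ hl.le (lam_lt_one hN).le
      nlinarith

lemma cube_closed (hN : 1 ≤ N) (k : ℕ) (w : Fin k → (Fin (N + 1) → Bool)) :
    IsClosed (cantorCube N k w) := by
  rw [cantorCube_eq N hN k w]
  have : {z : EuclideanSpace ℝ (Fin (N+1)) |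
      ∀ i, z i ∈ Set.Icc (base N k w i) (base N k w i + lam N ^ k)}
      = ⋂ i, (fun z : EuclideanSpace ℝ (Fin (N+1)) => z i) ⁻¹'
          Set.Icc (base N k w i) (base N k w i + lam N ^ k) := by
    ext z; simp
  rw [this]
  exact isClosed_iInter fun i =>
    IsClosed.preimage (EuclideanSpace.proj i).continuous isClosed_Icc

lemma Ek_closed (hN : 1 ≤ N) (k : ℕ) : IsClosed (cantorEk N k) := by
  exact isClosed_iUnion_of_finite fun w => cube_closed hN k w

lemma E_closed (hN : 1 ≤ N) : IsClosed (cantorE N) :=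
  isClosed_iInter fun k => Ek_closed hN k

abbrev Gr (N : ℕ) := ℕ → Fin (N+1) → ZMod 2

noncomputable def haarG (N : ℕ) : Measure (Gr N) :=
  Measure.addHaarMeasure (⊤ : PositiveCompacts (Gr N))

instance (N : ℕ) : (haarG N).IsAddLeftInvariant := by
  unfold haarG; infer_instance

lemma haarG_univ (N : ℕ) : haarG N Set.univ = 1 := by
  simpa [haarG] using Measure.addHaarMeasure_self (K₀ := (⊤ : PositiveCompacts (Gr N)))

def cylSet (N k : ℕ) (g₀ : Gr N) : Set (Gr N) := {g | ∀ j, j < k → g j = g₀ j}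

lemma cylSet_measurable (N k : ℕ) (g₀ : Gr N) : MeasurableSet (cylSet N k g₀) := by
  have : cylSet N k g₀ = ⋂ j ∈ Set.Iio k, (fun g : Gr N => g j) ⁻¹' {g₀ j} := by
    ext g; simp [cylSet]
  rw [this]
  exact MeasurableSet.biInter (Set.finite_Iio k).countable
    fun j _ => (measurable_pi_apply j) (MeasurableSet.singleton _)

lemma haarG_cylSet (N k : ℕ) (g₀ : Gr N) :
    haarG N (cylSet N k g₀) = ((2 : ℝ≥0∞) ^ (k * (N+1)))⁻¹ := by
  classical
  set A : (Fin k → Fin (N+1) → ZMod 2) → Set (Gr N) :=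
    fun t => {g | ∀ j : Fin k, g (j : ℕ) = t j} with hA
  have key : ∀ (t : Fin k → Fin (N+1) → ZMod 2) (g : Gr N) (j : Fin k),
      ((fun j' : ℕ => if h : j' < k then - t ⟨j', h⟩ else 0) + g) (j : ℕ)
        = - t j + g (j : ℕ) := by
    intro t g j
    simp [Pi.add_apply, dif_pos j.isLt]
  have htrans : ∀ t, A t = (fun g : Gr N =>
      (fun j' : ℕ => if h : j' < k then - t ⟨j', h⟩ else 0) + g) ⁻¹' A 0 := by
    intro t
    ext g
    simp only [hA, Set.mem_preimage, Set.mem_setOf_eq, key t g, Pi.zero_apply]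
    constructor
    · intro h j; rw [h j]; exact neg_add_cancel _
    · intro h j
      have := h j
      rw [neg_add_eq_zero] at this
      exact this.symm
  have hmeas : ∀ t, MeasurableSet (A t) := by
    intro t
    have : A t = ⋂ j : Fin k, (fun g : Gr N => g (j : ℕ)) ⁻¹' {t j} := by
      ext g; simp [hA]
    rw [this]
    exact MeasurableSet.iInter fun j =>
      (measurable_pi_apply (j : ℕ)) (MeasurableSet.singleton _)
  have heq : ∀ t, haarG N (A t) = haarG N (A 0) := by
    intro t
    rw [htrans t]
    exact measure_preimage_add _ _ _
  have hdisj : Pairwise (Function.onFun Disjoint A) := by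
    intro t t' htt'
    rw [Function.onFun, Set.disjoint_left]
    intro g hg hg'
    apply htt'
    funext j
    rw [← hg j, ← hg' j]
  have hcover : ⋃ t, A t = Set.univ := by
    ext g
    simp only [Set.mem_iUnion, Set.mem_univ, iff_true]
    exact ⟨fun j => g (j : ℕ), fun j => rfl⟩
  have hsum : ∑ t, haarG N (A t) = 1 := by
    rw [← tsum_fintype (L := SummationFilter.unconditional _), ← measure_iUnion hdisj hmeas, hcover, haarG_univ]
  have hcard : (Fintype.card (Fin k → Fin (N+1) → ZMod 2) : ℝ≥0∞)
      = (2 : ℝ≥0∞) ^ (k * (N+1)) := by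
    simp [Fintype.card_fun, ZMod.card]
    push_cast
    rw [← pow_mul, mul_comm]
  have hsum' : (2 : ℝ≥0∞) ^ (k * (N+1)) * haarG N (A 0) = 1 := by
    have h2 : ∑ t, haarG N (A t) = ∑ _t : Fin k → Fin (N+1) → ZMod 2, haarG N (A 0) :=
      Finset.sum_congr rfl fun t _ => heq t
    rw [h2, Finset.sum_const, Finset.card_univ, nsmul_eq_mul, hcard] at hsum
    exact hsum
  have hcyl : cylSet N k g₀ = A (fun j : Fin k => g₀ (j : ℕ)) := by
    ext g
    simp only [cylSet, hA, Set.mem_setOf_eq]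
    constructor
    · intro h j; exact h _ j.isLt
    · intro h j hj; exact h ⟨j, hj⟩
  rw [hcyl, heq]
  exact ENNReal.eq_inv_of_mul_eq_one_left (by rw [mul_comm] at hsum'; exact hsum')

def toB {N : ℕ} (c : Fin (N+1) → ZMod 2) : Fin (N+1) → Bool := fun i => decide (c i = 1)

lemma summable_geom_lam (hN : 1 ≤ N) : Summable (fun j : ℕ => lam N ^ j) :=
  summable_geometric_of_lt_one (lam_pos N).le (lam_lt_one hN)

noncomputable def hmap (N : ℕ) (g : Gr N) : EuclideanSpace ℝ (Fin (N+1)) :=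
  ∑' j : ℕ, ((1 - lam N) * lam N ^ j) • cornerVec N (toB (g j))

lemma ite01_nonneg (b : Bool) : 0 ≤ (if b then (1:ℝ) else 0) := by cases b <;> norm_num
lemma ite01_le_one (b : Bool) : (if b then (1:ℝ) else 0) ≤ 1 := by cases b <;> norm_num

lemma norm_cornerVec_le (N : ℕ) (σ : Fin (N+1) → Bool) :
    ‖cornerVec N σ‖ ≤ Real.sqrt (N+1) := by
  rw [EuclideanSpace.norm_eq]
  apply Real.sqrt_le_sqrt
  calc ∑ i, ‖cornerVec N σ i‖ ^ 2 ≤ ∑ _i : Fin (N+1), (1:ℝ) := by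
        apply Finset.sum_le_sum
        intro i _
        have h5 : cornerVec N σ i = if σ i then (1:ℝ) else 0 := rfl
        rw [h5]
        split_ifs <;> norm_num
    _ = (N+1 : ℝ) := by simp

lemma summable_coord (hN : 1 ≤ N) (g : Gr N) (i : Fin (N+1)) :
    Summable (fun j : ℕ => (1 - lam N) * lam N ^ j * (if toB (g j) i then (1:ℝ) else 0)) := by
  apply Summable.of_nonneg_of_le _ _ ((summable_geom_lam hN).mul_left (1 - lam N))
  · intro j
    have h1 := (one_sub_lam_pos hN).le
    have h2 := pow_nonneg (lam_pos N).le j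
    have h3 := ite01_nonneg (toB (g j) i)
    positivity
  · intro j
    have h1 := (one_sub_lam_pos hN).le
    have h2 := pow_nonneg (lam_pos N).le j
    have h4 := ite01_le_one (toB (g j) i)
    exact mul_le_of_le_one_right (mul_nonneg h1 h2) h4

lemma hmap_apply (hN : 1 ≤ N) (g : Gr N) (i : Fin (N+1)) :
    hmap N g i = ∑' j : ℕ, (1 - lam N) * lam N ^ j * (if toB (g j) i then (1:ℝ) else 0) := by
  have hsum : Summable (fun j : ℕ => ((1 - lam N) * lam N ^ j) • cornerVec N (toB (g j))) := by
    apply Summable.of_norm_bounded (g := fun j : ℕ => ((1 - lam N) * Real.sqrt (N+1)) * lam N ^ j)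
      (Summable.mul_left _ (summable_geom_lam hN))
    intro j
    rw [norm_smul, Real.norm_eq_abs, abs_of_nonneg]
    · calc (1 - lam N) * lam N ^ j * ‖cornerVec N (toB (g j))‖
          ≤ (1 - lam N) * lam N ^ j * Real.sqrt (N+1) := by
            apply mul_le_mul_of_nonneg_left (norm_cornerVec_le _ _)
            have h1 := (one_sub_lam_pos hN).le
            have h2 := pow_nonneg (lam_pos N).le j
            positivity
        _ = (1 - lam N) * Real.sqrt (N+1) * lam N ^ j := by ring
    · have h1 := (one_sub_lam_pos hN).le
      have h2 := pow_nonneg (lam_pos N).le j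
      positivity
  have h1 : hmap N g i = EuclideanSpace.proj i (hmap N g) := rfl
  rw [h1, hmap, ContinuousLinearMap.map_tsum _ hsum]
  exact tsum_congr fun j => by
    rw [ContinuousLinearMap.map_smul]
    have h2 : EuclideanSpace.proj i (cornerVec N (toB (g j)))
        = if toB (g j) i then (1:ℝ) else 0 := rfl
    rw [h2, smul_eq_mul]



lemma hmap_mem_cube (hN : 1 ≤ N) (g : Gr N) (k : ℕ) :
    hmap N g ∈ cantorCube N k (fun j : Fin k => toB (g (j : ℕ))) := by
  rw [cantorCube_eq N hN]
  intro i
  rw [hmap_apply hN g i]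
  have hsa := summable_coord hN g i
  have hsa' := (summable_nat_add_iff
    (f := fun j : ℕ => (1 - lam N) * lam N ^ j * (if toB (g j) i then (1:ℝ) else 0)) k).mpr hsa
  have hsplit := Summable.sum_add_tsum_nat_add
    (f := fun j : ℕ => (1 - lam N) * lam N ^ j * (if toB (g j) i then (1:ℝ) else 0)) k hsa
  have hbase : base N k (fun j : Fin k => toB (g (j : ℕ))) i
      = ∑ j ∈ Finset.range k, (1 - lam N) * lam N ^ j * (if toB (g j) i then (1:ℝ) else 0) := by
    rw [base]
    exact Fin.sum_univ_eq_sum_range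
      (fun j => (1 - lam N) * lam N ^ j * (if toB (g j) i then (1:ℝ) else 0)) k
  have hterm_nonneg : ∀ j : ℕ,
      0 ≤ (1 - lam N) * lam N ^ (j + k) * (if toB (g (j + k)) i then (1:ℝ) else 0) := by
    intro j
    have h1 := (one_sub_lam_pos hN).le
    have h2 := pow_nonneg (lam_pos N).le (j + k)
    have h3 := ite01_nonneg (toB (g (j + k)) i)
    positivity
  have htail0 : 0 ≤ ∑' j : ℕ,
      (1 - lam N) * lam N ^ (j + k) * (if toB (g (j + k)) i then (1:ℝ) else 0) :=
    tsum_nonneg hterm_nonneg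
  have hbd : Summable (fun j : ℕ => ((1 - lam N) * lam N ^ k) * lam N ^ j) :=
    (summable_geom_lam hN).mul_left _
  have htail1 : ∑' j : ℕ,
      (1 - lam N) * lam N ^ (j + k) * (if toB (g (j + k)) i then (1:ℝ) else 0) ≤ lam N ^ k := by
    have hle := Summable.tsum_le_tsum (f := fun j : ℕ =>
        (1 - lam N) * lam N ^ (j + k) * (if toB (g (j + k)) i then (1:ℝ) else 0))
      (g := fun j : ℕ => ((1 - lam N) * lam N ^ k) * lam N ^ j) ?_ hsa' hbd
    · refine hle.trans ?_
      rw [tsum_mul_left, tsum_geometric_of_lt_one (lam_pos N).le (lam_lt_one hN)]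
      have hne : 1 - lam N ≠ 0 := (one_sub_lam_pos hN).ne'
      rw [le_iff_lt_or_eq]
      right
      field_simp
    · intro j
      have h1 := (one_sub_lam_pos hN).le
      have h2 := pow_nonneg (lam_pos N).le (j + k)
      have h4 := ite01_le_one (toB (g (j + k)) i)
      calc (1 - lam N) * lam N ^ (j + k) * (if toB (g (j + k)) i then (1:ℝ) else 0)
          ≤ (1 - lam N) * lam N ^ (j + k) := mul_le_of_le_one_right (mul_nonneg h1 h2) h4
        _ = ((1 - lam N) * lam N ^ k) * lam N ^ j := by rw [pow_add]; ring
  constructor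
  · rw [← hsplit, hbase]
    linarith
  · rw [← hsplit, hbase]
    linarith

lemma toB_inj {N : ℕ} : Function.Injective (toB (N := N)) := by
  intro c c' h
  funext i
  have h1 := congrFun h i
  simp only [toB] at h1
  have h2 : ∀ x y : ZMod 2, decide (x = 1) = decide (y = 1) → x = y := by decide
  exact h2 _ _ h1

lemma hmap_mem_E (hN : 1 ≤ N) (g : Gr N) : hmap N g ∈ cantorE N := by
  rw [cantorE]
  refine Set.mem_iInter.mpr fun k => ?_
  exact Set.mem_iUnion.mpr ⟨fun j : Fin k => toB (g (j : ℕ)), hmap_mem_cube hN g k⟩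

lemma continuous_hmap (hN : 1 ≤ N) : Continuous (hmap N) := by
  apply continuous_tsum (u := fun j : ℕ => ((1 - lam N) * Real.sqrt (N+1)) * lam N ^ j)
  · intro j
    apply Continuous.fun_smul continuous_const
    have h1 : Continuous (fun g : Gr N => g j) := continuous_apply j
    exact ((continuous_of_discreteTopology
      (f := fun c : Fin (N+1) → ZMod 2 => cornerVec N (toB c)))).comp h1
  · exact Summable.mul_left _ (summable_geom_lam hN)
  · intro j g
    rw [norm_smul, Real.norm_eq_abs, abs_of_nonneg]
    · calc (1 - lam N) * lam N ^ j * ‖cornerVec N (toB (g j))‖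
          ≤ (1 - lam N) * lam N ^ j * Real.sqrt (N+1) := by
            apply mul_le_mul_of_nonneg_left (norm_cornerVec_le _ _)
            have h1 := (one_sub_lam_pos hN).le
            have h2 := pow_nonneg (lam_pos N).le j
            positivity
        _ = (1 - lam N) * Real.sqrt (N+1) * lam N ^ j := by ring
    · have h1 := (one_sub_lam_pos hN).le
      have h2 := pow_nonneg (lam_pos N).le j
      positivity

noncomputable def mapMu (N : ℕ) : Measure (EuclideanSpace ℝ (Fin (N+1))) :=
  (haarG N).map (hmap N)

lemma mapMu_E (hN : 1 ≤ N) : mapMu N (cantorE N) = 1 := by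
  rw [mapMu, Measure.map_apply (continuous_hmap hN).measurable (E_closed hN).measurableSet]
  have : hmap N ⁻¹' cantorE N = Set.univ := by
    ext g
    simp [hmap_mem_E hN g]
  rw [this, haarG_univ]

lemma mapMu_bound (hN : 1 ≤ N) (s : Set (EuclideanSpace ℝ (Fin (N+1)))) (m : ℕ)
    (hs : EMetric.diam s < ENNReal.ofReal ((1 - 2 * lam N) * lam N ^ m)) :
    mapMu N s ≤ ((2 : ℝ≥0∞) ^ ((m+1) * (N+1)))⁻¹ := by
  have hmeasmap := (continuous_hmap hN).measurable
  have h1 : mapMu N s ≤ mapMu N (closure s) := measure_mono subset_closure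
  rw [mapMu, Measure.map_apply hmeasmap isClosed_closure.measurableSet] at h1
  rcases Set.eq_empty_or_nonempty (hmap N ⁻¹' closure s) with he | ⟨g₀, hg₀⟩
  · rw [he] at h1
    rw [measure_empty, nonpos_iff_eq_zero] at h1
    rw [mapMu, h1]
    exact zero_le
  · have hsub : hmap N ⁻¹' closure s ⊆ cylSet N (m+1) g₀ := by
      intro g hg
      intro j hj
      by_contra hne
      have hw : (fun j' : Fin (m+1) => toB (g (j' : ℕ)))
          ≠ (fun j' : Fin (m+1) => toB (g₀ (j' : ℕ))) := by
        intro h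
        apply hne
        have := congrFun h ⟨j, hj⟩
        exact toB_inj this
      have hsep := sep hN m _ _ (hmap N g) (hmap N g₀) hw
        (hmap_mem_cube hN g (m+1)) (hmap_mem_cube hN g₀ (m+1))
      have hdiam : edist (hmap N g) (hmap N g₀) ≤ EMetric.diam s := by
        exact (EMetric.edist_le_diam_of_mem (show hmap N g ∈ closure s from hg) (show hmap N g₀ ∈ closure s from hg₀)).trans_eq (Metric.ediam_closure s)
      have hlt : edist (hmap N g) (hmap N g₀)
          < ENNReal.ofReal ((1 - 2 * lam N) * lam N ^ m) := lt_of_le_of_lt hdiam hs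
      rw [edist_dist] at hlt
      have : dist (hmap N g) (hmap N g₀) < (1 - 2 * lam N) * lam N ^ m := by
        have hpos : 0 < (1 - 2 * lam N) * lam N ^ m :=
          mul_pos (sep_pos hN) (pow_pos (lam_pos N) m)
        exact (ENNReal.ofReal_lt_ofReal_iff hpos).mp hlt
      linarith
    calc mapMu N s ≤ haarG N (hmap N ⁻¹' closure s) := h1
      _ ≤ haarG N (cylSet N (m+1) g₀) := measure_mono hsub
      _ = ((2 : ℝ≥0∞) ^ ((m+1) * (N+1)))⁻¹ := haarG_cylSet N (m+1) g₀

lemma eq_zero_of_le_pow (x : ℝ≥0∞)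
    (h : ∀ m : ℕ, x ≤ ((2 : ℝ≥0∞) ^ ((m+1) * (N+1)))⁻¹) : x = 0 := by
  have h2 : ∀ m : ℕ, x ≤ ((2 : ℝ≥0∞)⁻¹) ^ m := by
    intro m
    refine (h m).trans ?_
    rw [← ENNReal.inv_pow]
    have hmle : m ≤ (m+1)*(N+1) := by nlinarith
    exact ENNReal.inv_le_inv.mpr (pow_le_pow_right₀ one_le_two hmle)
  have htend : Tendsto (fun m : ℕ => ((2 : ℝ≥0∞)⁻¹) ^ m) atTop (nhds 0) :=
    ENNReal.tendsto_pow_atTop_nhds_zero_of_lt_one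
      (by norm_num)
  exact le_antisymm (ge_of_tendsto' htend h2) zero_le

lemma pow_inv_eq_ofReal (hN : 1 ≤ N) (m : ℕ) :
    ((2:ℝ≥0∞) ^ ((m+1)*(N+1)))⁻¹ = ENNReal.ofReal (lam N ^ ((m+1)*N)) := by
  have hreal : lam N ^ ((m+1)*N) = ((1:ℝ)/2) ^ ((m+1)*(N+1)) := by
    rw [mul_comm (m+1) N, pow_mul, lam_pow hN, ← pow_mul, mul_comm (N+1) (m+1)]
  rw [hreal]
  have h2 : ((1:ℝ)/2) = (2:ℝ)⁻¹ := by norm_num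
  rw [h2, ENNReal.ofReal_pow (by norm_num), ENNReal.ofReal_inv_of_pos (by norm_num)]
  rw [ENNReal.ofReal_ofNat, ENNReal.inv_pow]

theorem cantorE_lower (hN : 1 ≤ N) : 0 < μH[(N : ℝ)] (cantorE N) := by
  classical
  have hcpos : 0 < 1 - 2 * lam N := sep_pos hN
  set c := 1 - 2 * lam N with hc
  have hl := lam_pos N
  have hl1 := lam_lt_one hN
  set ν := (ENNReal.ofReal (c ^ N)) • mapMu N with hν
  have hle : ν ≤ μH[(N:ℝ)] := by
    apply Measure.le_hausdorffMeasure _ _ (ENNReal.ofReal (c * lam N))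
      (ENNReal.ofReal_pos.mpr (by positivity))
    intro s hs
    rcases eq_zero_or_pos (EMetric.diam s) with hd0 | hdpos
    · have hμ0 : mapMu N s = 0 := by
        apply eq_zero_of_le_pow
        intro m
        apply mapMu_bound hN s m
        rw [hd0]
        exact ENNReal.ofReal_pos.mpr (by positivity)
      have : ν s = 0 := by
        rw [hν, Measure.smul_apply, hμ0, smul_zero]
      rw [this]
      exact zero_le
    · set d := (EMetric.diam s).toReal with hdd
      have hfin : EMetric.diam s ≠ ⊤ := (hs.trans_lt ENNReal.ofReal_lt_top).ne
      have hdiam_eq : EMetric.diam s = ENNReal.ofReal d := (ENNReal.ofReal_toReal hfin).symm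
      have hd : 0 < d := ENNReal.toReal_pos hdpos.ne' hfin
      have hdle : d ≤ c * lam N := ENNReal.toReal_le_of_le_ofReal (by positivity) hs
      have hex : ∃ n, c * lam N ^ n ≤ d := by
        obtain ⟨n, hn⟩ := exists_pow_lt_of_lt_one (div_pos hd hcpos) hl1
        refine ⟨n, ?_⟩
        have h3 := mul_lt_mul_of_pos_left hn hcpos
        rw [mul_div_cancel₀ _ hcpos.ne'] at h3
        exact h3.le
      have hkle : c * lam N ^ (Nat.find hex) ≤ d := Nat.find_spec hex
      have hkne : Nat.find hex ≠ 0 := by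
        intro h0
        rw [h0, pow_zero, mul_one] at hkle
        nlinarith
      obtain ⟨m, hm⟩ := Nat.exists_eq_succ_of_ne_zero hkne
      have hmlt : d < c * lam N ^ m := by
        have h4 : ¬ (c * lam N ^ m ≤ d) := Nat.find_min hex (by omega)
        linarith [not_le.mp h4]
      rw [hm] at hkle
      simp only [Nat.succ_eq_add_one] at hkle
      have hB := mapMu_bound hN s m
        (by rw [hdiam_eq]; exact (ENNReal.ofReal_lt_ofReal_iff (by positivity)).mpr hmlt)
      have hlam_le : lam N ^ (m+1) ≤ d / c := by
        rw [le_div_iff₀ hcpos]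
        linarith
      have hreal : lam N ^ ((m+1)*N) ≤ (d / c) ^ N := by
        rw [pow_mul]
        exact pow_le_pow_left₀ (pow_nonneg hl.le _) hlam_le N
      calc ν s = ENNReal.ofReal (c ^ N) * mapMu N s := by rw [hν, Measure.smul_apply, smul_eq_mul]
        _ ≤ ENNReal.ofReal (c ^ N) * ENNReal.ofReal (lam N ^ ((m+1)*N)) := by
            apply mul_le_mul_right
            rw [← pow_inv_eq_ofReal hN m]
            exact hB
        _ ≤ ENNReal.ofReal (c ^ N) * ENNReal.ofReal ((d/c)^N) :=
            mul_le_mul_right (ENNReal.ofReal_le_ofReal hreal) _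
        _ = ENNReal.ofReal (c^N * (d/c)^N) := (ENNReal.ofReal_mul (by positivity)).symm
        _ = ENNReal.ofReal (d ^ N) := by
            congr 1
            rw [div_pow]
            field_simp
        _ = EMetric.diam s ^ (N:ℝ) := by
            rw [hdiam_eq, ENNReal.ofReal_rpow_of_pos hd, Real.rpow_natCast]
  have hEν : ν (cantorE N) = ENNReal.ofReal (c ^ N) := by
    rw [hν, Measure.smul_apply, mapMu_E hN, smul_eq_mul, mul_one]
  calc (0:ℝ≥0∞) < ENNReal.ofReal (c ^ N) := ENNReal.ofReal_pos.mpr (by positivity)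
    _ = ν (cantorE N) := hEν.symm
    _ ≤ μH[(N:ℝ)] (cantorE N) := hle _

theorem cantorE_upper (hN : 1 ≤ N) :
    μH[(N : ℝ)] (cantorE N) ≤ ENNReal.ofReal (Real.sqrt (N+1) ^ N) := by
  have hl := lam_pos N
  have hl1 := lam_lt_one hN
  have hr : Tendsto (fun n : ℕ => ENNReal.ofReal (Real.sqrt (N+1) * lam N ^ n)) atTop (nhds 0) := by
    have h0 : Tendsto (fun n : ℕ => Real.sqrt (N+1) * lam N ^ n) atTop (nhds 0) := by
      simpa using (tendsto_pow_atTop_nhds_zero_of_lt_one hl.le hl1).const_mul (Real.sqrt (N+1))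
    simpa using ENNReal.tendsto_ofReal h0
  have ht : ∀ᶠ n in atTop, ∀ w : Fin n → (Fin (N+1) → Bool),
      EMetric.diam (cantorCube N n w) ≤ ENNReal.ofReal (Real.sqrt (N+1) * lam N ^ n) := by
    apply Eventually.of_forall
    intro n w
    apply EMetric.diam_le
    intro x hx y hy
    rw [edist_dist]
    exact ENNReal.ofReal_le_ofReal (dist_le_of_mem_cube hN n w hx hy)
  have hst : ∀ᶠ n in atTop, cantorE N ⊆ ⋃ w : Fin n → (Fin (N+1) → Bool), cantorCube N n w := by
    apply Eventually.of_forall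
    intro n
    exact Set.iInter_subset (fun k => cantorEk N k) n
  have hbound := MeasureTheory.Measure.hausdorffMeasure_le_liminf_sum (N:ℝ) (cantorE N)
    (fun n => ENNReal.ofReal (Real.sqrt (N+1) * lam N ^ n)) hr
    (fun n w => cantorCube N n w) ht hst
  refine hbound.trans ?_
  have hterm : ∀ n : ℕ, (∑ w : Fin n → (Fin (N+1) → Bool),
      EMetric.diam (cantorCube N n w) ^ (N:ℝ)) ≤ ENNReal.ofReal (Real.sqrt (N+1) ^ N) := by
    intro n
    have hsqpos : (0:ℝ) < Real.sqrt (N+1) := Real.sqrt_pos.mpr (by positivity)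
    have hapos : (0:ℝ) < Real.sqrt (N+1) * lam N ^ n := by positivity
    calc (∑ w : Fin n → (Fin (N+1) → Bool), EMetric.diam (cantorCube N n w) ^ (N:ℝ))
        ≤ ∑ _w : Fin n → (Fin (N+1) → Bool),
            (ENNReal.ofReal (Real.sqrt (N+1) * lam N ^ n)) ^ (N:ℝ) := by
          apply Finset.sum_le_sum
          intro w _
          apply ENNReal.rpow_le_rpow _ (Nat.cast_nonneg N)
          apply EMetric.diam_le
          intro x hx y hy
          rw [edist_dist]
          exact ENNReal.ofReal_le_ofReal (dist_le_of_mem_cube hN n w hx hy)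
      _ = (Fintype.card (Fin n → Fin (N+1) → Bool)) •
            (ENNReal.ofReal (Real.sqrt (N+1) * lam N ^ n)) ^ (N:ℝ) := by
          rw [Finset.sum_const, Finset.card_univ]
      _ = ENNReal.ofReal ((Fintype.card (Fin n → Fin (N+1) → Bool) : ℝ)
            * (Real.sqrt (N+1) * lam N ^ n) ^ N) := by
          rw [ENNReal.ofReal_rpow_of_pos hapos, Real.rpow_natCast, nsmul_eq_mul,
            ← ENNReal.ofReal_natCast, ← ENNReal.ofReal_mul (by positivity)]
      _ = ENNReal.ofReal (Real.sqrt (N+1) ^ N) := by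
          congr 1
          have hcard : (Fintype.card (Fin n → Fin (N+1) → Bool) : ℝ) = ((2:ℝ) ^ (N+1)) ^ n := by
            simp [Fintype.card_fun]
          rw [hcard]
          have hlam : (lam N ^ n) ^ N = (((1:ℝ)/2) ^ (N+1)) ^ n := by
            rw [← pow_mul, mul_comm n N, pow_mul, lam_pow hN]
          rw [mul_pow, hlam]
          have h2 : ((2:ℝ) ^ (N+1)) ^ n * (((1:ℝ)/2) ^ (N+1)) ^ n = 1 := by
            rw [← mul_pow, ← mul_pow]
            norm_num
          calc ((2:ℝ)^(N+1))^n * (Real.sqrt (N+1) ^ N * (((1:ℝ)/2)^(N+1))^n)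
              = (((2:ℝ)^(N+1))^n * (((1:ℝ)/2)^(N+1))^n) * Real.sqrt (N+1) ^ N := by ring
            _ = Real.sqrt (N+1) ^ N := by rw [h2, one_mul]
  refine le_trans (liminf_le_liminf (Eventually.of_forall hterm)) ?_
  rw [liminf_const]

/-- the corner Cantor set in `ℝ^{N+1}` with ratio `2^{-(N+1)/N}` has
positive and finite `N`-dimensional Hausdorff measure. -/
theorem stmt13 (N : ℕ) (hN : 1 ≤ N) :
    0 < μH[(N : ℝ)] (cantorE N) ∧ μH[(N : ℝ)] (cantorE N) < ⊤ := by
  exact ⟨cantorE_lower hN, (cantorE_upper hN).trans_lt ENNReal.ofReal_lt_top⟩
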